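/- Boundedness of rotated-Q1 IFE basis functions, uniformly in the interface location (reference-element form, h = 1): there exists a constant C > 0 depending only on β⁻ and β⁺ (and not on d, e) such that for all d, e ∈ (0,1), for either type of degrees of freedom (edge-mean or midpoint), and for each j ∈ {1,2,3,4}, the IFE basis function φⱼ (the unique piecewise rotated-Q1 function satisfying the jump conditions (J1)–(J3) whose degree-of-freedom vector is the j-th standard basis vector of ℝ⁴) satisfies |∂^α pˢ(x,y)| ≤ C for all (x,y) ∈ T, both s = ±, and all multi-indices α with |α| ≤ 2, where p⁻ and p⁺ are the two polynomial pieces of φⱼ. -/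

import Mathlib

open MeasureTheory Set

noncomputable section

/-- The rotated-Q1 polynomial `c₁ + c₂ x + c₃ y + c₄ (x² − y²)` with coefficient
vector `c = (c 0, c 1, c 2, c 3)`. -/
def rq1 (c : Fin 4 → ℝ) (x y : ℝ) : ℝ :=
  c 0 + c 1 * x + c 2 * y + c 3 * (x ^ 2 - y ^ 2)

/-- The piecewise rotated-Q1 function on the reference Type II interface element:
`p⁻` where `x ≤ d + (e − d) y`, `p⁺` elsewhere. -/
def phiFn (d e : ℝ) (cm cp : Fin 4 → ℝ) (x y : ℝ) : ℝ :=
  if x ≤ d + (e - d) * y then rq1 cm x y else rq1 cp x y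

/-- Jump condition (J1): continuity at the interface points `D = (d,0)` and `E = (e,1)`. -/
def J1 (d e : ℝ) (cm cp : Fin 4 → ℝ) : Prop :=
  rq1 cm d 0 = rq1 cp d 0 ∧ rq1 cm e 1 = rq1 cp e 1

/-- Jump condition (J2): matching of the `x² − y²` coefficients. -/
def J2 (cm cp : Fin 4 → ℝ) : Prop := cm 3 = cp 3

/-- The flux defect `∫₀¹ (β⁺∇p⁺ − β⁻∇p⁻)((1−t)d + te, t) · (1, d − e) dt`. -/
def fluxDefect (βm βp d e : ℝ) (cm cp : Fin 4 → ℝ) : ℝ :=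
  ∫ t in (0:ℝ)..1,
    ((βp * (cp 1 + 2 * cp 3 * ((1 - t) * d + t * e))
        - βm * (cm 1 + 2 * cm 3 * ((1 - t) * d + t * e))) * 1
      + (βp * (cp 2 - 2 * cp 3 * t) - βm * (cm 2 - 2 * cm 3 * t)) * (d - e))

/-- Jump condition (J3): the integral over `DE` of the jump of the normal flux vanishes. -/
def J3 (βm βp d e : ℝ) (cm cp : Fin 4 → ℝ) : Prop :=
  fluxDefect βm βp d e cm cp = 0

/-- The four edge-mean (integral-value) degrees of freedom of `φ`:
bottom, right, top, left edges of `T = [0,1]²`. -/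
def dofI (d e : ℝ) (cm cp : Fin 4 → ℝ) : Fin 4 → ℝ :=
  ![(∫ x in (0:ℝ)..d, rq1 cm x 0) + ∫ x in d..(1:ℝ), rq1 cp x 0,
    ∫ y in (0:ℝ)..1, rq1 cp 1 y,
    (∫ x in (0:ℝ)..e, rq1 cm x 1) + ∫ x in e..(1:ℝ), rq1 cp x 1,
    ∫ y in (0:ℝ)..1, rq1 cm 0 y]

/-- The four midpoint-value degrees of freedom of `φ`:
values at the midpoints of the bottom, right, top, left edges of `T = [0,1]²`. -/
def dofP (d e : ℝ) (cm cp : Fin 4 → ℝ) : Fin 4 → ℝ :=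
  ![phiFn d e cm cp (1/2) 0, phiFn d e cm cp 1 (1/2),
    phiFn d e cm cp (1/2) 1, phiFn d e cm cp 0 (1/2)]

/-- The partial derivative `∂ₓᵃ∂ᵧᵇ` of the rotated-Q1 polynomial with coefficients `c`. -/
def rq1D (c : Fin 4 → ℝ) : ℕ → ℕ → ℝ → ℝ → ℝ
  | 0, 0, x, y => rq1 c x y
  | 1, 0, x, _ => c 1 + 2 * c 3 * x
  | 0, 1, _, y => c 2 - 2 * c 3 * y
  | 2, 0, _, _ => 2 * c 3
  | 1, 1, _, _ => 0
  | 0, 2, _, _ => -(2 * c 3)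
  | _, _, _, _ => 0

/- ===== auxiliary lemmas for ife_basis_boundedness ===== -/

lemma absmul_le {a b x y : ℝ} (ha : |a| ≤ x) (hb : |b| ≤ y) : |a * b| ≤ x * y := by
  rw [abs_mul]
  exact mul_le_mul ha hb (abs_nonneg _) (le_trans (abs_nonneg _) ha)

lemma int_poly2 (P Q R lo hi : ℝ) :
    ∫ t in lo..hi, (P + Q * t + R * t ^ 2)
      = P * (hi - lo) + Q * (hi ^ 2 - lo ^ 2) / 2 + R * (hi ^ 3 - lo ^ 3) / 3 := by
  have h : ∀ t ∈ Set.uIcc lo hi,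
      HasDerivAt (fun t : ℝ => P * t + Q * (t ^ 2 / 2) + R * (t ^ 3 / 3))
        (P + Q * t + R * t ^ 2) t := by
    intro t _
    have h0 : HasDerivAt (fun t : ℝ => P * t) (P * 1) t := (hasDerivAt_id t).const_mul P
    have h1 : HasDerivAt (fun t : ℝ => Q * (t ^ 2 / 2)) (Q * ((↑2 * t ^ 1) / 2)) t :=
      ((hasDerivAt_pow 2 t).div_const 2).const_mul Q
    have h2 : HasDerivAt (fun t : ℝ => R * (t ^ 3 / 3)) (R * ((↑3 * t ^ 2) / 3)) t :=
      ((hasDerivAt_pow 3 t).div_const 3).const_mul R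
    have h3 : HasDerivAt (fun t : ℝ => P * t + Q * (t ^ 2 / 2) + R * (t ^ 3 / 3))
        (P * 1 + Q * ((↑2 * t ^ 1) / 2) + R * ((↑3 * t ^ 2) / 3)) t := (h0.add h1).add h2
    convert h3 using 1
    ring
  rw [intervalIntegral.integral_eq_sub_of_hasDerivAt h
    ((Continuous.intervalIntegrable (by continuity) lo hi))]
  ring

lemma int_rq1_x (c : Fin 4 → ℝ) (y lo hi : ℝ) :
    ∫ x in lo..hi, rq1 c x y
      = c 0 * (hi - lo) + c 1 * (hi ^ 2 - lo ^ 2) / 2 + c 2 * y * (hi - lo)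
        + c 3 * ((hi ^ 3 - lo ^ 3) / 3 - y ^ 2 * (hi - lo)) := by
  have h : Set.EqOn (fun x => rq1 c x y)
      (fun x => (c 0 + c 2 * y - c 3 * y ^ 2) + c 1 * x + c 3 * x ^ 2) (Set.uIcc lo hi) :=
    fun x _ => by unfold rq1; ring
  rw [intervalIntegral.integral_congr h, int_poly2]
  ring

lemma int_rq1_y (c : Fin 4 → ℝ) (x lo hi : ℝ) :
    ∫ y in lo..hi, rq1 c x y
      = (c 0 + c 1 * x + c 3 * x ^ 2) * (hi - lo) + c 2 * (hi ^ 2 - lo ^ 2) / 2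
        - c 3 * (hi ^ 3 - lo ^ 3) / 3 := by
  have h : Set.EqOn (fun y => rq1 c x y)
      (fun y => (c 0 + c 1 * x + c 3 * x ^ 2) + c 2 * y + (- c 3) * y ^ 2) (Set.uIcc lo hi) :=
    fun y _ => by unfold rq1; ring
  rw [intervalIntegral.integral_congr h, int_poly2]
  ring

lemma fluxDefect_eq (βm βp d e : ℝ) (cm cp : Fin 4 → ℝ) :
    fluxDefect βm βp d e cm cp
      = βp * cp 1 - βm * cm 1 + (βp * cp 3 - βm * cm 3) * (d + e)
        + (d - e) * ((βp * cp 2 - βm * cm 2) - (βp * cp 3 - βm * cm 3)) := by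
  unfold fluxDefect
  have h : Set.EqOn
      (fun t : ℝ => ((βp * (cp 1 + 2 * cp 3 * ((1 - t) * d + t * e))
          - βm * (cm 1 + 2 * cm 3 * ((1 - t) * d + t * e))) * 1
        + (βp * (cp 2 - 2 * cp 3 * t) - βm * (cm 2 - 2 * cm 3 * t)) * (d - e)))
      (fun t : ℝ =>
        (βp * (cp 1 + 2 * cp 3 * d) - βm * (cm 1 + 2 * cm 3 * d)
          + (d - e) * (βp * cp 2 - βm * cm 2))
        + ((2 * βp * cp 3 - 2 * βm * cm 3) * (e - d)
            - (d - e) * (2 * βp * cp 3 - 2 * βm * cm 3)) * t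
        + 0 * t ^ 2) (Set.uIcc 0 1) := fun t _ => by ring
  rw [intervalIntegral.integral_congr h, int_poly2]
  ring

set_option maxHeartbeats 800000 in
lemma ubound (βm βp M F N u : ℝ) (hβm : 0 < βm) (hβp : 0 < βp)
    (hM : 1 ≤ M) (hF0 : 0 ≤ F) (hF1 : F ≤ M)
    (hu : (βm * M + (βp - βm) * F) * u = (βp - βm) * N) (hN : |N| ≤ 10) :
    |u| ≤ 10 * (βm + βp) / min βm βp := by
  have hδ : 0 < min βm βp := lt_min hβm hβp
  have hΔ : min βm βp ≤ βm * M + (βp - βm) * F := by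
    rcases le_total βm βp with h | h
    · have h1 : βm ≤ βm * M := by nlinarith
      have h2 : 0 ≤ (βp - βm) * F := mul_nonneg (by linarith) hF0
      have h3 : min βm βp ≤ βm := min_le_left _ _
      linarith
    · have h1 : βp ≤ βp * M := by nlinarith
      have h2 : 0 ≤ (βm - βp) * (M - F) := mul_nonneg (by linarith) (by linarith)
      have h3 : min βm βp ≤ βp := min_le_right _ _
      nlinarith
  have hβd : |βp - βm| ≤ βm + βp := abs_le.mpr ⟨by linarith, by linarith⟩
  have h1 : (min βm βp) * |u| ≤ (βm + βp) * 10 := by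
    calc (min βm βp) * |u| ≤ (βm * M + (βp - βm) * F) * |u| :=
          mul_le_mul_of_nonneg_right hΔ (abs_nonneg _)
      _ = |(βm * M + (βp - βm) * F) * u| := by
          rw [abs_mul, abs_of_nonneg (le_trans hδ.le hΔ)]
      _ = |(βp - βm) * N| := by rw [hu]
      _ ≤ (βm + βp) * 10 := absmul_le hβd hN
  rw [le_div_iff₀ hδ]
  nlinarith [abs_nonneg u]

set_option maxHeartbeats 2000000 in
lemma key_edge (βm βp d e A0 A1 A2 B0 B1 B2 q gB gR gT gL : ℝ)
    (hβm : 0 < βm) (hβp : 0 < βp)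
    (hd0 : 0 < d) (hd1 : d < 1) (he0 : 0 < e) (he1 : e < 1)
    (hgB : |gB| ≤ 1) (hgR : |gR| ≤ 1) (hgT : |gT| ≤ 1) (hgL : |gL| ≤ 1)
    (h1 : A0 + A1 * d = B0 + B1 * d)
    (h2 : A0 + A1 * e + A2 = B0 + B1 * e + B2)
    (h3 : βp * B1 - βm * A1 + (βp - βm) * q * (d + e)
        + (d - e) * ((βp * B2 - βm * A2) - (βp - βm) * q) = 0)
    (hB : A0 * d + A1 * d ^ 2 / 2 + q * d ^ 3 / 3
        + (B0 * (1 - d) + B1 * (1 - d ^ 2) / 2 + q * (1 - d ^ 3) / 3) = gB)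
    (hR : B0 + B1 + B2 / 2 + 2 * q / 3 = gR)
    (hT : A0 * e + A1 * e ^ 2 / 2 + A2 * e + q * (e ^ 3 / 3 - e)
        + (B0 * (1 - e) + B1 * (1 - e ^ 2) / 2 + B2 * (1 - e)
            + q * ((1 - e ^ 3) / 3 - (1 - e))) = gT)
    (hL : A0 + A2 / 2 - q / 3 = gL) :
    |A0| ≤ 20 + 5 * (10 * (βm + βp) / min βm βp) ∧
    |A1| ≤ 20 + 5 * (10 * (βm + βp) / min βm βp) ∧
    |A2| ≤ 20 + 5 * (10 * (βm + βp) / min βm βp) ∧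
    |B0| ≤ 20 + 5 * (10 * (βm + βp) / min βm βp) ∧
    |B1| ≤ 20 + 5 * (10 * (βm + βp) / min βm βp) ∧
    |B2| ≤ 20 + 5 * (10 * (βm + βp) / min βm βp) ∧
    |q| ≤ 20 + 5 * (10 * (βm + βp) / min βm βp) := by
  have hδ : 0 < min βm βp := lt_min hβm hβp
  have hU0 : 0 < 10 * (βm + βp) / min βm βp := div_pos (by linarith) hδ
  -- pure d,e facts, proved in a small context
  have f1 : -(1 / 4 : ℝ) ≤ (d ^ 2 + e ^ 2 - d - e) / 2 := by
    nlinarith [sq_nonneg (2 * d - 1), sq_nonneg (2 * e - 1)]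
  have f2 : (d ^ 2 + e ^ 2 - d - e) / 2 ≤ 0 := by
    nlinarith [mul_pos hd0 (by linarith : (0:ℝ) < 1 - d),
      mul_pos he0 (by linarith : (0:ℝ) < 1 - e)]
  have f3 : -(1 : ℝ) ≤ (e - d) * ((d + e) / 2) := by
    nlinarith [mul_nonneg (by linarith : (0:ℝ) ≤ 1 - d) (by linarith : (0:ℝ) ≤ 1 + d),
      mul_nonneg (by linarith : (0:ℝ) ≤ 1 - e) (by linarith : (0:ℝ) ≤ 1 + e)]
  have f4 : (e - d) * ((d + e) / 2) ≤ 1 := by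
    nlinarith [mul_nonneg (by linarith : (0:ℝ) ≤ 1 - d) (by linarith : (0:ℝ) ≤ 1 + d),
      mul_nonneg (by linarith : (0:ℝ) ≤ 1 - e) (by linarith : (0:ℝ) ≤ 1 + e)]
  have hM1 : (1 : ℝ) ≤ 1 + (e - d) ^ 2 := le_add_of_nonneg_right (sq_nonneg (e - d))
  have hF0 : 0 ≤ (1 + (e - d) ^ 2) * ((d + e) / 2)
      - 3 / 2 * (1 - d - e) * ((d ^ 2 + e ^ 2 - d - e) / 2) := by
    rcases le_total (d + e) 1 with h | h
    · nlinarith [mul_nonneg (by linarith : (0:ℝ) ≤ 1 - d - e)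
        (mul_nonneg hd0.le (by linarith : (0:ℝ) ≤ 1 - d)),
        mul_nonneg (by linarith : (0:ℝ) ≤ 1 - d - e)
          (mul_nonneg he0.le (by linarith : (0:ℝ) ≤ 1 - e)),
        sq_nonneg (e - d), mul_pos hd0 he0,
        mul_nonneg (mul_nonneg hd0.le he0.le) (sq_nonneg (e - d))]
    · nlinarith [sq_nonneg (2 * d - 1), sq_nonneg (2 * e - 1), sq_nonneg (e - d),
        mul_nonneg (by linarith : (0:ℝ) ≤ d + e - 1) (sq_nonneg (e - d)),
        mul_nonneg (by linarith : (0:ℝ) ≤ d + e - 1) (sq_nonneg (2 * d - 1)),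
        mul_nonneg (by linarith : (0:ℝ) ≤ d + e - 1) (sq_nonneg (2 * e - 1))]
  have hF1 : (1 + (e - d) ^ 2) * ((d + e) / 2)
      - 3 / 2 * (1 - d - e) * ((d ^ 2 + e ^ 2 - d - e) / 2) ≤ 1 + (e - d) ^ 2 := by
    rcases le_total (d + e) 1 with h | h
    · nlinarith [sq_nonneg (2 * d - 1), sq_nonneg (2 * e - 1), sq_nonneg (e - d),
        mul_nonneg (by linarith : (0:ℝ) ≤ 1 - d - e) (sq_nonneg (e - d)),
        mul_nonneg (by linarith : (0:ℝ) ≤ 2 - d - e) (sq_nonneg (e - d)),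
        mul_nonneg (by linarith : (0:ℝ) ≤ 1 - d - e) (sq_nonneg (2 * d - 1)),
        mul_nonneg (by linarith : (0:ℝ) ≤ 1 - d - e) (sq_nonneg (2 * e - 1))]
    · nlinarith [mul_nonneg (by linarith : (0:ℝ) ≤ d + e - 1)
        (mul_nonneg hd0.le (by linarith : (0:ℝ) ≤ 1 - d)),
        mul_nonneg (by linarith : (0:ℝ) ≤ d + e - 1)
          (mul_nonneg he0.le (by linarith : (0:ℝ) ≤ 1 - e)),
        sq_nonneg (e - d), mul_nonneg (by linarith : (0:ℝ) ≤ 2 - d - e) (sq_nonneg (e - d))]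
  have hN : |((gR - gL) - (e - d) * (gT - gB))
      - 3 / 2 * (1 - d - e) * (gR + gL - gB - gT)| ≤ 10 := by
    obtain ⟨hgB1, hgB2⟩ := abs_le.mp hgB
    obtain ⟨hgR1, hgR2⟩ := abs_le.mp hgR
    obtain ⟨hgT1, hgT2⟩ := abs_le.mp hgT
    obtain ⟨hgL1, hgL2⟩ := abs_le.mp hgL
    have p1 : |(e - d) * (gT - gB)| ≤ 1 * 2 :=
      absmul_le (abs_le.mpr ⟨by linarith, by linarith⟩)
        (abs_le.mpr ⟨by linarith, by linarith⟩)
    have p2 : |(1 - d - e) * (gR + gL - gB - gT)| ≤ 1 * 4 :=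
      absmul_le (abs_le.mpr ⟨by linarith, by linarith⟩)
        (abs_le.mpr ⟨by linarith, by linarith⟩)
    obtain ⟨p1a, p1b⟩ := abs_le.mp p1
    obtain ⟨p2a, p2b⟩ := abs_le.mp p2
    rw [abs_le]
    constructor <;> linarith
  -- linear algebraic eliminations
  have hA0e : A0 = B0 - d * (A1 - B1) := by linear_combination h1
  have hA2e : A2 = B2 - (e - d) * (A1 - B1) := by linear_combination h2 - h1
  have hBp : B0 + B1 / 2 + q / 3 - (A1 - B1) * d ^ 2 / 2 = gB := by
    linear_combination hB - d * hA0e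
  have hTp : B0 + B1 / 2 + B2 - 2 * q / 3 - (A1 - B1) * e ^ 2 / 2 = gT := by
    linear_combination hT - e * hA0e - e * hA2e
  have hLp : B0 + B2 / 2 - q / 3 - (A1 - B1) * ((d + e) / 2) = gL := by
    linear_combination hL - hA0e - (1 / 2 : ℝ) * hA2e
  have hq : q = 3 / 2 * ((gR + gL - gB - gT)
      - ((d ^ 2 + e ^ 2 - d - e) / 2) * (A1 - B1)) := by
    linear_combination (3 / 2 : ℝ) * (hR + hLp - hBp - hTp)
  have hb2 : B1 = (gR - gL) - q - ((d + e) / 2) * (A1 - B1) := by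
    linear_combination hR - hLp
  have hb3 : B2 = (gT - gB) + q + (e - d) * ((d + e) / 2) * (A1 - B1) := by
    linear_combination hTp - hBp
  have h3pp : βm * (1 + (e - d) ^ 2) * (A1 - B1)
      = (βp - βm) * (B1 - (e - d) * B2 + 2 * e * q) := by
    linear_combination (-1 : ℝ) * h3 - βm * (d - e) * hA2e
  have hu : (βm * (1 + (e - d) ^ 2)
        + (βp - βm) * ((1 + (e - d) ^ 2) * ((d + e) / 2)
            - 3 / 2 * (1 - d - e) * ((d ^ 2 + e ^ 2 - d - e) / 2))) * (A1 - B1)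
      = (βp - βm) * (((gR - gL) - (e - d) * (gT - gB))
          - 3 / 2 * (1 - d - e) * (gR + gL - gB - gT)) := by
    linear_combination h3pp + (βp - βm) * hb2 - (βp - βm) * (e - d) * hb3
      + (d + e - 1) * (βp - βm) * hq
  have hub : |A1 - B1| ≤ 10 * (βm + βp) / min βm βp :=
    ubound βm βp _ _ _ _ hβm hβp hM1 hF0 hF1 hu hN
  clear hu h3pp h3 hB hT hL hBp hTp hLp hN hF0 hF1 hM1 h1 h2
  obtain ⟨hu1, hu2⟩ := abs_le.mp hub
  obtain ⟨hgB1, hgB2⟩ := abs_le.mp hgB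
  obtain ⟨hgR1, hgR2⟩ := abs_le.mp hgR
  obtain ⟨hgT1, hgT2⟩ := abs_le.mp hgT
  obtain ⟨hgL1, hgL2⟩ := abs_le.mp hgL
  have pw : |((d ^ 2 + e ^ 2 - d - e) / 2) * (A1 - B1)|
      ≤ (1 / 4) * (10 * (βm + βp) / min βm βp) :=
    absmul_le (abs_le.mpr ⟨f1, by linarith⟩) hub
  have ps : |((d + e) / 2) * (A1 - B1)| ≤ 1 * (10 * (βm + βp) / min βm βp) :=
    absmul_le (abs_le.mpr ⟨by linarith, by linarith⟩) hub
  have pms : |(e - d) * ((d + e) / 2) * (A1 - B1)|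
      ≤ 1 * (10 * (βm + βp) / min βm βp) :=
    absmul_le (abs_le.mpr ⟨f3, f4⟩) hub
  have pd : |d * (A1 - B1)| ≤ 1 * (10 * (βm + βp) / min βm βp) :=
    absmul_le (abs_le.mpr ⟨by linarith, by linarith⟩) hub
  have pm : |(e - d) * (A1 - B1)| ≤ 1 * (10 * (βm + βp) / min βm βp) :=
    absmul_le (abs_le.mpr ⟨by linarith, by linarith⟩) hub
  obtain ⟨pw1, pw2⟩ := abs_le.mp pw
  obtain ⟨ps1, ps2⟩ := abs_le.mp ps
  obtain ⟨pms1, pms2⟩ := abs_le.mp pms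
  obtain ⟨pd1, pd2⟩ := abs_le.mp pd
  obtain ⟨pm1, pm2⟩ := abs_le.mp pm
  have hqb : |q| ≤ 6 + 10 * (βm + βp) / min βm βp := by
    rw [hq, abs_le]; constructor <;> linarith
  obtain ⟨hq1, hq2⟩ := abs_le.mp hqb
  have hB1b : |B1| ≤ 8 + 2 * (10 * (βm + βp) / min βm βp) := by
    rw [hb2, abs_le]; constructor <;> linarith
  obtain ⟨hB11, hB12⟩ := abs_le.mp hB1b
  have hB2b : |B2| ≤ 8 + 2 * (10 * (βm + βp) / min βm βp) := by
    rw [hb3, abs_le]; constructor <;> linarith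
  obtain ⟨hB21, hB22⟩ := abs_le.mp hB2b
  have hB0e : B0 = gR - B1 - B2 / 2 - 2 * q / 3 := by linear_combination hR
  have hB0b : |B0| ≤ 20 + 4 * (10 * (βm + βp) / min βm βp) := by
    rw [hB0e, abs_le]; constructor <;> linarith
  obtain ⟨hB01, hB02⟩ := abs_le.mp hB0b
  refine ⟨?_, ?_, ?_, ?_, ?_, ?_, ?_⟩
  · rw [hA0e, abs_le]; constructor <;> linarith
  · rw [abs_le]; constructor <;> linarith
  · rw [hA2e, abs_le]; constructor <;> linarith
  · rw [abs_le]; constructor <;> linarith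
  · rw [abs_le]; constructor <;> linarith
  · rw [abs_le]; constructor <;> linarith
  · rw [abs_le]; constructor <;> linarith

set_option maxHeartbeats 2000000 in
lemma key_mid (βm βp d e A0 A1 A2 B0 B1 B2 q gB gR gT gL : ℝ)
    (hβm : 0 < βm) (hβp : 0 < βp)
    (hd0 : 0 < d) (hd1 : d < 1) (he0 : 0 < e) (he1 : e < 1)
    (hgB : |gB| ≤ 1) (hgR : |gR| ≤ 1) (hgT : |gT| ≤ 1) (hgL : |gL| ≤ 1)
    (h1 : A0 + A1 * d = B0 + B1 * d)
    (h2 : A0 + A1 * e + A2 = B0 + B1 * e + B2)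
    (h3 : βp * B1 - βm * A1 + (βp - βm) * q * (d + e)
        + (d - e) * ((βp * B2 - βm * A2) - (βp - βm) * q) = 0)
    (hB : (1 / 2 ≤ d ∧ A0 + A1 / 2 + q / 4 = gB) ∨ (d ≤ 1 / 2 ∧ B0 + B1 / 2 + q / 4 = gB))
    (hR : B0 + B1 + B2 / 2 + 3 * q / 4 = gR)
    (hT : (1 / 2 ≤ e ∧ A0 + A1 / 2 + A2 - 3 * q / 4 = gT)
        ∨ (e ≤ 1 / 2 ∧ B0 + B1 / 2 + B2 - 3 * q / 4 = gT))
    (hL : A0 + A2 / 2 - q / 4 = gL) :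
    |A0| ≤ 20 + 5 * (10 * (βm + βp) / min βm βp) ∧
    |A1| ≤ 20 + 5 * (10 * (βm + βp) / min βm βp) ∧
    |A2| ≤ 20 + 5 * (10 * (βm + βp) / min βm βp) ∧
    |B0| ≤ 20 + 5 * (10 * (βm + βp) / min βm βp) ∧
    |B1| ≤ 20 + 5 * (10 * (βm + βp) / min βm βp) ∧
    |B2| ≤ 20 + 5 * (10 * (βm + βp) / min βm βp) ∧
    |q| ≤ 20 + 5 * (10 * (βm + βp) / min βm βp) := by
  have hδ : 0 < min βm βp := lt_min hβm hβp
  have hU0 : 0 < 10 * (βm + βp) / min βm βp := div_pos (by linarith) hδ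
  have hM1 : (1 : ℝ) ≤ 1 + (e - d) ^ 2 := le_add_of_nonneg_right (sq_nonneg (e - d))
  have hN : |((gR - gL) - (e - d) * (gT - gB))
      + (d + e - 1) * (gR + gL - gB - gT)| ≤ 10 := by
    obtain ⟨hgB1, hgB2⟩ := abs_le.mp hgB
    obtain ⟨hgR1, hgR2⟩ := abs_le.mp hgR
    obtain ⟨hgT1, hgT2⟩ := abs_le.mp hgT
    obtain ⟨hgL1, hgL2⟩ := abs_le.mp hgL
    have p1 : |(e - d) * (gT - gB)| ≤ 1 * 2 :=
      absmul_le (abs_le.mpr ⟨by linarith, by linarith⟩)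
        (abs_le.mpr ⟨by linarith, by linarith⟩)
    have p2 : |(d + e - 1) * (gR + gL - gB - gT)| ≤ 1 * 4 :=
      absmul_le (abs_le.mpr ⟨by linarith, by linarith⟩)
        (abs_le.mpr ⟨by linarith, by linarith⟩)
    obtain ⟨p1a, p1b⟩ := abs_le.mp p1
    obtain ⟨p2a, p2b⟩ := abs_le.mp p2
    rw [abs_le]
    constructor <;> linarith
  have hA0e : A0 = B0 - d * (A1 - B1) := by linear_combination h1
  have hA2e : A2 = B2 - (e - d) * (A1 - B1) := by linear_combination h2 - h1
  obtain ⟨tB, htB1, htB2, hBc, hFB⟩ :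
      ∃ tB : ℝ, -(1 / 2) ≤ tB ∧ tB ≤ 0
        ∧ (B0 + B1 / 2 + q / 4 + (A1 - B1) * tB = gB)
        ∧ ((tB = 0 ∧ d ≤ 1 / 2) ∨ (tB = 1 / 2 - d ∧ 1 / 2 ≤ d)) := by
    rcases hB with ⟨hdh, hBv⟩ | ⟨hdh, hBv⟩
    · exact ⟨1 / 2 - d, by linarith, by linarith,
        by linear_combination hBv - hA0e, Or.inr ⟨rfl, hdh⟩⟩
    · exact ⟨0, by linarith, by linarith, by linear_combination hBv, Or.inl ⟨rfl, hdh⟩⟩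
  obtain ⟨tT, htT1, htT2, hTc, hFT⟩ :
      ∃ tT : ℝ, -(1 / 2) ≤ tT ∧ tT ≤ 0
        ∧ (B0 + B1 / 2 + B2 - 3 * q / 4 + (A1 - B1) * tT = gT)
        ∧ ((tT = 0 ∧ e ≤ 1 / 2) ∨ (tT = 1 / 2 - e ∧ 1 / 2 ≤ e)) := by
    rcases hT with ⟨heh, hTv⟩ | ⟨heh, hTv⟩
    · exact ⟨1 / 2 - e, by linarith, by linarith,
        by linear_combination hTv - hA0e - hA2e, Or.inr ⟨rfl, heh⟩⟩
    · exact ⟨0, by linarith, by linarith, by linear_combination hTv, Or.inl ⟨rfl, heh⟩⟩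
  have hF0 : 0 ≤ (d + e) / 2 - (e - d) * (tT - tB)
      - (d + e - 1) * ((d + e) / 2 + tB + tT) := by
    clear hBc hTc hN h3 hR hL hA0e hA2e
    rcases hFB with ⟨rfl, hdh⟩ | ⟨rfl, hdh⟩ <;> rcases hFT with ⟨rfl, heh⟩ | ⟨rfl, heh⟩ <;>
      nlinarith [sq_nonneg (d + e - 1), sq_nonneg (e - d), sq_nonneg (2 * d - 1),
        sq_nonneg (2 * e - 1), mul_pos hd0 he0, sq_nonneg (d + e),
        mul_pos (mul_pos hd0 he0) (mul_pos hd0 he0)]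
  have hF1 : (d + e) / 2 - (e - d) * (tT - tB)
      - (d + e - 1) * ((d + e) / 2 + tB + tT) ≤ 1 + (e - d) ^ 2 := by
    clear hBc hTc hN h3 hR hL hA0e hA2e hF0
    rcases hFB with ⟨rfl, hdh⟩ | ⟨rfl, hdh⟩ <;> rcases hFT with ⟨rfl, heh⟩ | ⟨rfl, heh⟩ <;>
      nlinarith [sq_nonneg (d + e - 1), sq_nonneg (e - d), sq_nonneg (2 * d - 1),
        sq_nonneg (2 * e - 1), mul_pos hd0 he0, sq_nonneg (d + e),
        mul_pos (mul_pos hd0 he0) (mul_pos hd0 he0)]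
  have hLp : B0 + B2 / 2 - q / 4 - (A1 - B1) * ((d + e) / 2) = gL := by
    linear_combination hL - hA0e - (1 / 2 : ℝ) * hA2e
  have hq : q = (gR + gL - gB - gT) + (A1 - B1) * ((d + e) / 2 + tB + tT) := by
    linear_combination hR + hLp - hBc - hTc
  have hb2 : B1 = (gR - gL) - q - ((d + e) / 2) * (A1 - B1) := by
    linear_combination hR - hLp
  have hb3 : B2 = (gT - gB) + q - (A1 - B1) * (tT - tB) := by
    linear_combination hTc - hBc
  have h3pp : βm * (1 + (e - d) ^ 2) * (A1 - B1)
      = (βp - βm) * (B1 - (e - d) * B2 + 2 * e * q) := by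
    linear_combination (-1 : ℝ) * h3 - βm * (d - e) * hA2e
  have hu : (βm * (1 + (e - d) ^ 2)
        + (βp - βm) * ((d + e) / 2 - (e - d) * (tT - tB)
            - (d + e - 1) * ((d + e) / 2 + tB + tT))) * (A1 - B1)
      = (βp - βm) * (((gR - gL) - (e - d) * (gT - gB))
          + (d + e - 1) * (gR + gL - gB - gT)) := by
    linear_combination h3pp + (βp - βm) * hb2 - (βp - βm) * (e - d) * hb3
      + (d + e - 1) * (βp - βm) * hq
  have hub : |A1 - B1| ≤ 10 * (βm + βp) / min βm βp :=
    ubound βm βp _ _ _ _ hβm hβp hM1 hF0 hF1 hu hN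
  clear hu h3pp h3 hBc hTc hL hLp hN hF0 hF1 hM1 h1 h2 hFB hFT
  obtain ⟨hu1, hu2⟩ := abs_le.mp hub
  obtain ⟨hgB1, hgB2⟩ := abs_le.mp hgB
  obtain ⟨hgR1, hgR2⟩ := abs_le.mp hgR
  obtain ⟨hgT1, hgT2⟩ := abs_le.mp hgT
  obtain ⟨hgL1, hgL2⟩ := abs_le.mp hgL
  have pq : |(A1 - B1) * ((d + e) / 2 + tB + tT)|
      ≤ (10 * (βm + βp) / min βm βp) * 1 :=
    absmul_le hub (abs_le.mpr ⟨by linarith, by linarith⟩)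
  have ps : |((d + e) / 2) * (A1 - B1)| ≤ 1 * (10 * (βm + βp) / min βm βp) :=
    absmul_le (abs_le.mpr ⟨by linarith, by linarith⟩) hub
  have pt : |(A1 - B1) * (tT - tB)| ≤ (10 * (βm + βp) / min βm βp) * 1 :=
    absmul_le hub (abs_le.mpr ⟨by linarith, by linarith⟩)
  have pd : |d * (A1 - B1)| ≤ 1 * (10 * (βm + βp) / min βm βp) :=
    absmul_le (abs_le.mpr ⟨by linarith, by linarith⟩) hub
  have pm : |(e - d) * (A1 - B1)| ≤ 1 * (10 * (βm + βp) / min βm βp) :=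
    absmul_le (abs_le.mpr ⟨by linarith, by linarith⟩) hub
  obtain ⟨pq1, pq2⟩ := abs_le.mp pq
  obtain ⟨ps1, ps2⟩ := abs_le.mp ps
  obtain ⟨pt1, pt2⟩ := abs_le.mp pt
  obtain ⟨pd1, pd2⟩ := abs_le.mp pd
  obtain ⟨pm1, pm2⟩ := abs_le.mp pm
  have hqb : |q| ≤ 4 + 10 * (βm + βp) / min βm βp := by
    rw [hq, abs_le]; constructor <;> linarith
  obtain ⟨hq1, hq2⟩ := abs_le.mp hqb
  have hB1b : |B1| ≤ 6 + 2 * (10 * (βm + βp) / min βm βp) := by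
    rw [hb2, abs_le]; constructor <;> linarith
  obtain ⟨hB11, hB12⟩ := abs_le.mp hB1b
  have hB2b : |B2| ≤ 6 + 2 * (10 * (βm + βp) / min βm βp) := by
    rw [hb3, abs_le]; constructor <;> linarith
  obtain ⟨hB21, hB22⟩ := abs_le.mp hB2b
  have hB0e : B0 = gR - B1 - B2 / 2 - 3 * q / 4 := by linear_combination hR
  have hB0b : |B0| ≤ 20 + 4 * (10 * (βm + βp) / min βm βp) := by
    rw [hB0e, abs_le]; constructor <;> linarith
  obtain ⟨hB01, hB02⟩ := abs_le.mp hB0b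
  refine ⟨?_, ?_, ?_, ?_, ?_, ?_, ?_⟩
  · rw [hA0e, abs_le]; constructor <;> linarith
  · rw [abs_le]; constructor <;> linarith
  · rw [hA2e, abs_le]; constructor <;> linarith
  · rw [abs_le]; constructor <;> linarith
  · rw [abs_le]; constructor <;> linarith
  · rw [abs_le]; constructor <;> linarith
  · rw [abs_le]; constructor <;> linarith

set_option maxHeartbeats 2000000 in
lemma final_bound (c : Fin 4 → ℝ) (C0 : ℝ) (h0 : |c 0| ≤ C0) (hc1 : |c 1| ≤ C0)
    (hc2 : |c 2| ≤ C0) (hc3 : |c 3| ≤ C0) (a b : ℕ) (hab : a + b ≤ 2)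
    (x y : ℝ) (hx : x ∈ Set.Icc (0 : ℝ) 1) (hy : y ∈ Set.Icc (0 : ℝ) 1) :
    |rq1D c a b x y| ≤ 5 * C0 := by
  obtain ⟨hx0, hx1⟩ := hx
  obtain ⟨hy0, hy1⟩ := hy
  have hC0 : 0 ≤ C0 := le_trans (abs_nonneg _) h0
  have hxa : |x| ≤ 1 := abs_le.mpr ⟨by linarith, hx1⟩
  have hya : |y| ≤ 1 := abs_le.mpr ⟨by linarith, hy1⟩
  have hsq : |x ^ 2 - y ^ 2| ≤ 1 := abs_le.mpr ⟨by nlinarith, by nlinarith⟩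
  have h2c3 : |2 * c 3| ≤ 2 * C0 := by
    rw [abs_mul, abs_two]
    exact mul_le_mul_of_nonneg_left hc3 (by norm_num)
  have p1 : |c 1 * x| ≤ C0 * 1 := absmul_le hc1 hxa
  have p2 : |c 2 * y| ≤ C0 * 1 := absmul_le hc2 hya
  have p3 : |c 3 * (x ^ 2 - y ^ 2)| ≤ C0 * 1 := absmul_le hc3 hsq
  have p4 : |2 * c 3 * x| ≤ 2 * C0 * 1 := absmul_le h2c3 hxa
  have p5 : |2 * c 3 * y| ≤ 2 * C0 * 1 := absmul_le h2c3 hya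
  obtain ⟨q0a, q0b⟩ := abs_le.mp h0
  obtain ⟨q1a, q1b⟩ := abs_le.mp hc1
  obtain ⟨q2a, q2b⟩ := abs_le.mp hc2
  obtain ⟨q3a, q3b⟩ := abs_le.mp hc3
  obtain ⟨p1a, p1b⟩ := abs_le.mp p1
  obtain ⟨p2a, p2b⟩ := abs_le.mp p2
  obtain ⟨p3a, p3b⟩ := abs_le.mp p3
  obtain ⟨p4a, p4b⟩ := abs_le.mp p4
  obtain ⟨p5a, p5b⟩ := abs_le.mp p5
  have ha2 : a ≤ 2 := by omega
  interval_cases a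
  · have hb2' : b ≤ 2 := by omega
    interval_cases b
    · simp only [rq1D, rq1, abs_le]
      constructor <;> linarith
    · simp only [rq1D, abs_le]
      constructor <;> linarith
    · simp only [rq1D, abs_le, abs_neg]
      constructor <;> linarith
  · have hb2' : b ≤ 1 := by omega
    interval_cases b
    · simp only [rq1D, abs_le]
      constructor <;> linarith
    · simp only [rq1D, abs_zero]
      linarith
  · have hb2' : b = 0 := by omega
    subst hb2'
    simp only [rq1D, abs_le]
    constructor <;> linarith

set_option maxHeartbeats 2000000 in
/-- Boundedness of the rotated-Q1 IFE basis functions, uniformly in the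
interface location (reference element, `h = 1`): all partial derivatives of order `≤ 2`
of both polynomial pieces of each basis function (for either type of degrees of freedom)
are bounded on `T` by a constant depending only on `β⁻, β⁺`. -/
theorem ife_basis_boundedness
    (βm βp : ℝ) (hβm : 0 < βm) (hβp : 0 < βp) :
    ∃ C > 0, ∀ d ∈ Ioo (0:ℝ) 1, ∀ e ∈ Ioo (0:ℝ) 1, ∀ j : Fin 4,
      ∀ cm cp : Fin 4 → ℝ,
        J1 d e cm cp → J2 cm cp → J3 βm βp d e cm cp →
        (dofI d e cm cp = (fun k => if k = j then 1 else 0) ∨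
          dofP d e cm cp = (fun k => if k = j then 1 else 0)) →
        ∀ a b : ℕ, a + b ≤ 2 → ∀ x ∈ Icc (0:ℝ) 1, ∀ y ∈ Icc (0:ℝ) 1,
          |rq1D cm a b x y| ≤ C ∧ |rq1D cp a b x y| ≤ C := by
  have hδ : 0 < min βm βp := lt_min hβm hβp
  have hU0 : 0 < 10 * (βm + βp) / min βm βp := div_pos (by linarith) hδ
  refine ⟨5 * (20 + 5 * (10 * (βm + βp) / min βm βp)), by linarith, ?_⟩
  rintro d ⟨hd0, hd1⟩ e ⟨he0, he1⟩ j cm cp hJ1 hJ2 hJ3 hdof a b hab x hx y hy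
  have hq32 : cm 3 = cp 3 := hJ2
  -- jump conditions in scalar form
  have hD : rq1 cm d 0 = rq1 cp d 0 := hJ1.1
  have hE : rq1 cm e 1 = rq1 cp e 1 := hJ1.2
  simp only [rq1] at hD hE
  rw [hq32] at hD hE
  have h1 : cm 0 + cm 1 * d = cp 0 + cp 1 * d := by linear_combination hD
  have h2 : cm 0 + cm 1 * e + cm 2 = cp 0 + cp 1 * e + cp 2 := by linear_combination hE
  have hFx : fluxDefect βm βp d e cm cp = 0 := hJ3
  rw [fluxDefect_eq] at hFx
  rw [hq32] at hFx
  have h3 : βp * cp 1 - βm * cm 1 + (βp - βm) * cp 3 * (d + e)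
      + (d - e) * ((βp * cp 2 - βm * cm 2) - (βp - βm) * cp 3) = 0 := by
    linear_combination hFx
  have hgB : |(if (0 : Fin 4) = j then (1:ℝ) else 0)| ≤ 1 := by split <;> norm_num
  have hgR : |(if (1 : Fin 4) = j then (1:ℝ) else 0)| ≤ 1 := by split <;> norm_num
  have hgT : |(if (2 : Fin 4) = j then (1:ℝ) else 0)| ≤ 1 := by split <;> norm_num
  have hgL : |(if (3 : Fin 4) = j then (1:ℝ) else 0)| ≤ 1 := by split <;> norm_num
  have key : |cm 0| ≤ 20 + 5 * (10 * (βm + βp) / min βm βp) ∧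
      |cm 1| ≤ 20 + 5 * (10 * (βm + βp) / min βm βp) ∧
      |cm 2| ≤ 20 + 5 * (10 * (βm + βp) / min βm βp) ∧
      |cp 0| ≤ 20 + 5 * (10 * (βm + βp) / min βm βp) ∧
      |cp 1| ≤ 20 + 5 * (10 * (βm + βp) / min βm βp) ∧
      |cp 2| ≤ 20 + 5 * (10 * (βm + βp) / min βm βp) ∧
      |cp 3| ≤ 20 + 5 * (10 * (βm + βp) / min βm βp) := by
    rcases hdof with hdof | hdof
    · -- edge-mean dofs
      have hkB : dofI d e cm cp 0 = if (0 : Fin 4) = j then (1:ℝ) else 0 := by rw [hdof]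
      have hkR : dofI d e cm cp 1 = if (1 : Fin 4) = j then (1:ℝ) else 0 := by rw [hdof]
      have hkT : dofI d e cm cp 2 = if (2 : Fin 4) = j then (1:ℝ) else 0 := by rw [hdof]
      have hkL : dofI d e cm cp 3 = if (3 : Fin 4) = j then (1:ℝ) else 0 := by rw [hdof]
      simp only [dofI, Matrix.cons_val_zero, Matrix.cons_val_one, Matrix.head_cons,
        Matrix.cons_val_two, Matrix.tail_cons, Matrix.cons_val_three] at hkB hkR hkT hkL
      rw [int_rq1_x, int_rq1_x] at hkB hkT
      rw [int_rq1_y] at hkR hkL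
      rw [hq32] at hkB hkT hkL
      exact key_edge βm βp d e (cm 0) (cm 1) (cm 2) (cp 0) (cp 1) (cp 2) (cp 3)
        _ _ _ _ hβm hβp hd0 hd1 he0 he1 hgB hgR hgT hgL h1 h2 h3
        (by linear_combination hkB) (by linear_combination hkR)
        (by linear_combination hkT) (by linear_combination hkL)
    · -- midpoint dofs
      have hkB : dofP d e cm cp 0 = if (0 : Fin 4) = j then (1:ℝ) else 0 := by rw [hdof]
      have hkR : dofP d e cm cp 1 = if (1 : Fin 4) = j then (1:ℝ) else 0 := by rw [hdof]
      have hkT : dofP d e cm cp 2 = if (2 : Fin 4) = j then (1:ℝ) else 0 := by rw [hdof]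
      have hkL : dofP d e cm cp 3 = if (3 : Fin 4) = j then (1:ℝ) else 0 := by rw [hdof]
      simp only [dofP, Matrix.cons_val_zero, Matrix.cons_val_one, Matrix.head_cons,
        Matrix.cons_val_two, Matrix.tail_cons, Matrix.cons_val_three, phiFn,
        mul_zero, add_zero, mul_one] at hkB hkR hkT hkL
      rw [if_neg (not_le.mpr (by linarith : d + (e - d) * (1/2) < 1))] at hkR
      rw [if_pos (by linarith : (0:ℝ) ≤ d + (e - d) * (1/2))] at hkL
      simp only [rq1] at hkR hkL
      rw [hq32] at hkL
      have hBarg : (1/2 ≤ d ∧ cm 0 + cm 1 / 2 + cp 3 / 4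
            = (if (0 : Fin 4) = j then (1:ℝ) else 0))
          ∨ (d ≤ 1/2 ∧ cp 0 + cp 1 / 2 + cp 3 / 4
            = (if (0 : Fin 4) = j then (1:ℝ) else 0)) := by
        by_cases hcB : (1/2 : ℝ) ≤ d
        · rw [if_pos hcB] at hkB
          simp only [rq1] at hkB
          rw [hq32] at hkB
          exact Or.inl ⟨hcB, by linear_combination hkB⟩
        · rw [if_neg hcB] at hkB
          simp only [rq1] at hkB
          exact Or.inr ⟨(not_le.mp hcB).le, by linear_combination hkB⟩
      have hTarg : (1/2 ≤ e ∧ cm 0 + cm 1 / 2 + cm 2 - 3 * cp 3 / 4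
            = (if (2 : Fin 4) = j then (1:ℝ) else 0))
          ∨ (e ≤ 1/2 ∧ cp 0 + cp 1 / 2 + cp 2 - 3 * cp 3 / 4
            = (if (2 : Fin 4) = j then (1:ℝ) else 0)) := by
        by_cases hcT : (1/2 : ℝ) ≤ d + (e - d)
        · rw [if_pos hcT] at hkT
          simp only [rq1] at hkT
          rw [hq32] at hkT
          exact Or.inl ⟨by linarith, by linear_combination hkT⟩
        · rw [if_neg hcT] at hkT
          simp only [rq1] at hkT
          exact Or.inr ⟨by linarith [not_le.mp hcT], by linear_combination hkT⟩
      exact key_mid βm βp d e (cm 0) (cm 1) (cm 2) (cp 0) (cp 1) (cp 2) (cp 3)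
        _ _ _ _ hβm hβp hd0 hd1 he0 he1 hgB hgR hgT hgL h1 h2 h3
        hBarg (by linear_combination hkR) hTarg (by linear_combination hkL)
  obtain ⟨b0, b1, b2, c0, c1, c2, c3⟩ := key
  constructor
  · refine final_bound cm _ b0 b1 b2 ?_ a b hab x y hx hy
    rw [hq32]; exact c3
  · exact final_bound cp _ c0 c1 c2 c3 a b hab x y hx hy

end
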